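/- Let (α_k)_{k≥0} be a sequence of positive reals with α_0 ≤ 1 and α_{k+1} = α_k / √(1 + α_k) for all k ≥ 0. Then α_K ≤ 3/K for every integer K > 0. -/

import Mathlib

/-- If α₀ ≤ 1, α_k > 0 and α_{k+1} = α_k / √(1+α_k), then α_K ≤ 3/K for K > 0. -/
theorem stmt_6 (α : ℕ → ℝ) (hpos : ∀ k, 0 < α k) (h0 : α 0 ≤ 1)
    (hrec : ∀ k, α (k + 1) = α k / Real.sqrt (1 + α k)) :
    ∀ K : ℕ, 0 < K → α K ≤ 3 / (K : ℝ) := by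
  have hle1 : ∀ k, α k ≤ 1 := by
    intro k
    induction k with
    | zero => exact h0
    | succ n ih =>
      rw [hrec n]
      have ha := hpos n
      have hs : (1:ℝ) ≤ Real.sqrt (1 + α n) := by
        nlinarith [Real.sq_sqrt (show (0:ℝ) ≤ 1 + α n by linarith),
          Real.sqrt_nonneg (1 + α n)]
      calc α n / Real.sqrt (1 + α n) ≤ α n / 1 := by
            apply div_le_div_of_nonneg_left (le_of_lt ha) one_pos hs
        _ = α n := by ring
        _ ≤ 1 := ih
  have hinv : ∀ k : ℕ, (k : ℝ) / 3 ≤ 1 / α k := by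
    intro k
    induction k with
    | zero =>
      have := hpos 0
      simp
      positivity
    | succ n ih =>
      have ha := hpos n
      have ha1 := hle1 n
      set s := Real.sqrt (1 + α n) with hs
      have hs2 : s ^ 2 = 1 + α n := Real.sq_sqrt (by linarith)
      have hs1 : (1:ℝ) ≤ s := by
        nlinarith [Real.sqrt_nonneg (1 + α n)]
      have hsle : s ≤ 2 := by
        nlinarith
      have h1 : 1 / α (n + 1) = s / α n := by
        rw [hrec n, one_div_div]
      rw [h1]
      have h3 : 1 / 3 ≤ (s - 1) / α n := by
        rw [le_div_iff₀ ha]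
        nlinarith
      have key : 1 / α n + 1 / 3 ≤ s / α n := by
        have hsplit : s / α n = 1 / α n + (s - 1) / α n := by
          field_simp
          ring
        linarith
      push_cast
      linarith
  intro K hK
  have hKpos : (0:ℝ) < K := by exact_mod_cast hK
  have h := hinv K
  have ha := hpos K
  rw [div_le_div_iff₀ (by norm_num : (0:ℝ) < 3) ha] at h
  rw [le_div_iff₀ hKpos]
  nlinarith
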